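/- Let p be a prime number and m a positive integer. Consider the polynomial ring 𝔽_p[X, Y] in two variables and the two 𝔽_p-algebra homomorphisms ι₁, ι₂ : 𝔽_p[T] → 𝔽_p[X, Y] determined by ι₁(T) = X and ι₂(T) = Y. Then the number of maximal ideals 𝔪 of 𝔽_p[X, Y] such that the residue field 𝔽_p[X, Y]/𝔪 has exactly p^m elements and ι₁⁻¹(𝔪) = ι₂⁻¹(𝔪) (the contractions of 𝔪 along ι₁ and ι₂ agree) is at most p^m. -/

import Mathlib

open Polynomial
namespace CardMaxIdealsAux
open scoped Classical
variable {p : ℕ} [Fact p.Prime]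

lemma aeval_pow_pow {F : Type*} [Field F] [Algebra (ZMod p) F] (k : ℕ) (g : (ZMod p)[X]) (z : F) :
    Polynomial.aeval (z ^ p ^ k) g = (Polynomial.aeval z g) ^ p ^ k := by
  haveI : CharP F p := charP_of_injective_ringHom (algebraMap (ZMod p) F).injective p
  have h := Polynomial.hom_eval₂ g (algebraMap (ZMod p) F) (iterateFrobenius F p k) z
  rw [RingHom.ext_zmod ((iterateFrobenius F p k).comp (algebraMap (ZMod p) F))
    (algebraMap (ZMod p) F)] at h
  simpa [aeval_def, iterateFrobenius_def] using h.symm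

lemma natCard_adjoinRoot (f : (ZMod p)[X]) (hf : f ≠ 0) :
    Nat.card (AdjoinRoot f) = p ^ f.natDegree := by
  haveI : Module.Finite (ZMod p) (AdjoinRoot f) :=
    Module.Finite.of_basis (AdjoinRoot.powerBasis hf).basis
  haveI : Finite (AdjoinRoot f) := Module.finite_of_finite (ZMod p)
  haveI : Fintype (AdjoinRoot f) := Fintype.ofFinite _
  rw [Nat.card_eq_fintype_card, Module.card_eq_pow_finrank (K := ZMod p), ZMod.card,
    (AdjoinRoot.powerBasis hf).finrank, AdjoinRoot.powerBasis_dim]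

variable {F : Type*} [Field F] [Algebra (ZMod p) F]

lemma natDegree_minpoly_le [Finite F] (x : F) {k : ℕ} (hk : 0 < k) (h : x ^ p ^ k = x) :
    (minpoly (ZMod p) x).natDegree ≤ k := by
  classical
  haveI : Module.Finite (ZMod p) F := Module.finite_iff_finite.mpr ‹_›
  have hx : IsIntegral (ZMod p) x := .of_finite _ x
  set f := minpoly (ZMod p) x with hfdef
  haveI : Fact (Irreducible f) := ⟨minpoly.irreducible hx⟩
  set φ := AdjoinRoot.liftAlgHom f (Algebra.ofId (ZMod p) _) x
    (by rw [← minpoly.aeval (ZMod p) x, aeval_def]; rfl) with hφdef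
  have hinj : Function.Injective φ := φ.toRingHom.injective
  set g0 : (ZMod p)[X] := X ^ p ^ k - X with hg0def
  have hplt : 1 < p ^ k := Nat.one_lt_pow hk.ne' (Fact.out : p.Prime).one_lt
  have hg0m : g0.map (algebraMap (ZMod p) F) = X ^ p ^ k - X := by
    rw [hg0def, Polynomial.map_sub, Polynomial.map_pow, map_X]
  have hg0 : g0.map (algebraMap (ZMod p) F) ≠ 0 := by
    rw [hg0m]; exact FiniteField.X_pow_card_sub_X_ne_zero F hplt
  have hsub : Set.range φ ⊆ ((g0.map (algebraMap (ZMod p) F)).roots.toFinset : Set F) := by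
    rintro _ ⟨a, rfl⟩
    obtain ⟨g, rfl⟩ := AdjoinRoot.mk_surjective a
    rw [hφdef, AdjoinRoot.liftAlgHom_mk]
    show Polynomial.aeval x g ∈ ((g0.map (algebraMap (ZMod p) F)).roots.toFinset : Set F)
    have hfix : (Polynomial.aeval x g) ^ p ^ k = Polynomial.aeval x g := by
      rw [← aeval_pow_pow, h]
    simp only [Finset.coe_sort_coe, Multiset.mem_toFinset, Set.mem_setOf_eq, Finset.mem_coe]
    rw [mem_roots hg0, IsRoot.def, hg0m]
    simp [sub_eq_zero, hfix]
  have hcard1 : Nat.card (Set.range φ) = p ^ f.natDegree := by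
    rw [Nat.card_range_of_injective hinj, natCard_adjoinRoot f (minpoly.ne_zero hx)]
  have hcard2 : (Set.range φ).ncard ≤ p ^ k := by
    refine le_trans (Set.ncard_le_ncard hsub (Finset.finite_toSet _)) ?_
    rw [Set.ncard_coe_finset]
    refine le_trans (Multiset.toFinset_card_le _) ?_
    refine le_trans (Polynomial.card_roots' _) ?_
    rw [hg0m, FiniteField.X_pow_card_sub_X_natDegree_eq F hplt]
  rw [← Nat.card_coe_set_eq, hcard1] at hcard2
  exact (Nat.pow_le_pow_iff_right (Fact.out : p.Prime).one_lt).mp hcard2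

lemma exists_frob_conj [Finite F] {x y : F}
    (hxy : minpoly (ZMod p) x = minpoly (ZMod p) y) :
    ∃ t < (minpoly (ZMod p) x).natDegree, y = x ^ p ^ t := by
  classical
  haveI : Module.Finite (ZMod p) F := Module.finite_iff_finite.mpr ‹_›
  have hx : IsIntegral (ZMod p) x := .of_finite _ x
  set f := minpoly (ZMod p) x with hfdef
  set d := f.natDegree with hddef
  have hd : 0 < d := minpoly.natDegree_pos hx
  set fm := f.map (algebraMap (ZMod p) F) with hfmdef
  have hfm0 : fm ≠ 0 := by
    rw [hfmdef, Ne, Polynomial.map_eq_zero]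
    exact minpoly.ne_zero hx
  have hroot : ∀ i : ℕ, Polynomial.aeval (x ^ p ^ i) f = 0 := by
    intro i
    rw [aeval_pow_pow, minpoly.aeval, zero_pow (pow_ne_zero i (Fact.out : p.Prime).pos.ne')]
  set T : Finset F := (Finset.range d).image (fun i => x ^ p ^ i) with hTdef
  have hTsub : T ⊆ fm.roots.toFinset := by
    intro z hz
    rw [hTdef, Finset.mem_image] at hz
    obtain ⟨i, _, rfl⟩ := hz
    rw [Multiset.mem_toFinset, mem_roots hfm0, IsRoot.def, hfmdef, Polynomial.eval_map,
      ← Polynomial.aeval_def]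
    exact hroot i
  have hinjT : Set.InjOn (fun i => x ^ p ^ i) (Finset.range d) := by
    have core : ∀ i j : ℕ, i < j → j < d → x ^ p ^ i ≠ x ^ p ^ j := by
      intro i j hij hjd heq
      have hinjfrob : Function.Injective (fun z : F => z ^ p ^ i) := by
        haveI : CharP F p := charP_of_injective_ringHom (algebraMap (ZMod p) F).injective p
        have := (iterateFrobenius F p i).injective
        exact this
      have hxji : x ^ p ^ (j - i) = x := by
        apply hinjfrob
        simp only
        rw [← pow_mul, ← pow_add]
        rw [Nat.sub_add_cancel hij.le]
        exact heq.symm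
      have := natDegree_minpoly_le (p := p) x (Nat.sub_pos_of_lt hij) hxji
      rw [← hfdef] at this
      omega
    intro i hi j hj hij
    simp only [Finset.coe_sort_coe, Finset.mem_coe, Finset.mem_range] at hi hj
    by_contra hne
    rcases lt_or_gt_of_ne hne with h' | h'
    · exact core i j h' hj hij
    · exact core j i h' hi hij.symm
  have hTcard : T.card = d := by
    rw [hTdef, Finset.card_image_of_injOn hinjT, Finset.card_range]
  have hrc : fm.roots.toFinset.card ≤ d := by
    refine le_trans (Multiset.toFinset_card_le _) (le_trans (Polynomial.card_roots' _) ?_)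
    rw [hfmdef, natDegree_map]
  have hTeq : T = fm.roots.toFinset :=
    Finset.eq_of_subset_of_card_le hTsub (le_trans hrc hTcard.symm.le)
  have hy : y ∈ fm.roots.toFinset := by
    rw [Multiset.mem_toFinset, mem_roots hfm0, IsRoot.def, hfmdef, Polynomial.eval_map,
      ← Polynomial.aeval_def, hxy, minpoly.aeval]
  rw [← hTeq, hTdef, Finset.mem_image] at hy
  obtain ⟨t, ht, hyt⟩ := hy
  exact ⟨t, Finset.mem_range.mp ht, hyt.symm⟩

lemma card_aroots_galois (m : ℕ) (hm : 0 < m) (f : (ZMod p)[X]) (hmo : f.Monic)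
    (hirr : Irreducible f) (hdeg : f.natDegree = m) :
    (f.aroots (GaloisField p m)).toFinset.card = m := by
  classical
  haveI : Fact (Irreducible f) := ⟨hirr⟩
  haveI : Finite (GaloisField p m) := Nat.finite_of_card_ne_zero
    (by rw [GaloisField.card p m hm.ne']; exact (pow_pos (Fact.out : p.Prime).pos m).ne')
  haveI : Fintype (GaloisField p m) := Fintype.ofFinite _
  haveI : Finite (AdjoinRoot f) := Nat.finite_of_card_ne_zero
    (by rw [natCard_adjoinRoot f hmo.ne_zero]; exact (pow_pos (Fact.out : p.Prime).pos _).ne')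
  haveI : Fintype (AdjoinRoot f) := Fintype.ofFinite _
  have hcards : Fintype.card (AdjoinRoot f) = Fintype.card (GaloisField p m) := by
    rw [← Nat.card_eq_fintype_card, ← Nat.card_eq_fintype_card, natCard_adjoinRoot f hmo.ne_zero,
      hdeg, GaloisField.card p m hm.ne']
  let σ : AdjoinRoot f ≃ₐ[ZMod p] GaloisField p m := FiniteField.algEquivOfCardEq p hcards
  have hz : Polynomial.aeval (σ (AdjoinRoot.root f)) f = 0 := by
    rw [Polynomial.aeval_algHom_apply, AdjoinRoot.aeval_eq, AdjoinRoot.mk_self, map_zero]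
  have hfz : f = minpoly (ZMod p) (σ (AdjoinRoot.root f)) :=
    minpoly.eq_of_irreducible_of_monic hirr hz hmo
  have hsplits : Splits (f.map (algebraMap (ZMod p) (GaloisField p m))) := by
    rw [hfz]; exact Normal.splits inferInstance _
  have hsep : (f.map (algebraMap (ZMod p) (GaloisField p m))).Separable :=
    (PerfectField.separable_of_irreducible hirr).map
  rw [aroots_def, Multiset.toFinset_card_of_nodup (nodup_roots hsep),
    ← hsplits.natDegree_eq_card_roots, natDegree_map, hdeg]

lemma main_struct (m : ℕ) (hm : 0 < m) (𝔪 : Ideal (MvPolynomial (Fin 2) (ZMod p)))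
    (h1 : 𝔪.IsMaximal)
    (h2 : Nat.card (MvPolynomial (Fin 2) (ZMod p) ⧸ 𝔪) = p ^ m)
    (h3 : 𝔪.comap ((Polynomial.aeval (R := ZMod p)
          (MvPolynomial.X (0 : Fin 2) : MvPolynomial (Fin 2) (ZMod p))).toRingHom) =
      𝔪.comap ((Polynomial.aeval (R := ZMod p)
          (MvPolynomial.X (1 : Fin 2) : MvPolynomial (Fin 2) (ZMod p))).toRingHom)) :
    (minpoly (ZMod p) (Ideal.Quotient.mk 𝔪 (MvPolynomial.X 0))).Monic ∧
    Irreducible (minpoly (ZMod p) (Ideal.Quotient.mk 𝔪 (MvPolynomial.X 0))) ∧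
    (minpoly (ZMod p) (Ideal.Quotient.mk 𝔪 (MvPolynomial.X 0))).natDegree = m ∧
    ∃ t, t < m ∧ 𝔪 = RingHom.ker (MvPolynomial.aeval (R := ZMod p)
        ![AdjoinRoot.root (minpoly (ZMod p) (Ideal.Quotient.mk 𝔪 (MvPolynomial.X 0))),
          AdjoinRoot.root (minpoly (ZMod p) (Ideal.Quotient.mk 𝔪 (MvPolynomial.X 0))) ^ p ^ t]) := by
  classical
  haveI := h1
  letI : Field (MvPolynomial (Fin 2) (ZMod p) ⧸ 𝔪) := Ideal.Quotient.field 𝔪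
  haveI : Finite (MvPolynomial (Fin 2) (ZMod p) ⧸ 𝔪) :=
    Nat.finite_of_card_ne_zero (by rw [h2]; exact (pow_pos (Fact.out : p.Prime).pos m).ne')
  haveI : Module.Finite (ZMod p) (MvPolynomial (Fin 2) (ZMod p) ⧸ 𝔪) :=
    Module.finite_iff_finite.mpr ‹_›
  set x := Ideal.Quotient.mk 𝔪 (MvPolynomial.X (0 : Fin 2)) with hxdef
  set y := Ideal.Quotient.mk 𝔪 (MvPolynomial.X (1 : Fin 2)) with hydef
  have hx : IsIntegral (ZMod p) x := .of_finite _ x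
  have hy : IsIntegral (ZMod p) y := .of_finite _ y
  have key : ∀ i : Fin 2, 𝔪.comap ((Polynomial.aeval (R := ZMod p)
      (MvPolynomial.X i : MvPolynomial (Fin 2) (ZMod p))).toRingHom)
      = RingHom.ker (Polynomial.aeval (Ideal.Quotient.mk 𝔪 (MvPolynomial.X i))) := by
    intro i
    ext g
    rw [Ideal.mem_comap, RingHom.mem_ker, AlgHom.toRingHom_eq_coe, RingHom.coe_coe,
      ← Ideal.Quotient.eq_zero_iff_mem]
    have := (Polynomial.aeval_algHom_apply (Ideal.Quotient.mkₐ (ZMod p) 𝔪)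
      (MvPolynomial.X i) g).symm
    simp only [Ideal.Quotient.mkₐ_eq_mk] at this
    rw [this]
  have hker : RingHom.ker (Polynomial.aeval (R := ZMod p) x)
      = RingHom.ker (Polynomial.aeval (R := ZMod p) y) := by
    rw [hxdef, hydef, ← key 0, ← key 1, h3]
  have hmin : minpoly (ZMod p) x = minpoly (ZMod p) y := by
    rw [minpoly.ker_aeval_eq_span_minpoly, minpoly.ker_aeval_eq_span_minpoly] at hker
    exact Polynomial.eq_of_monic_of_associated (minpoly.monic hx) (minpoly.monic hy)
      (Ideal.span_singleton_eq_span_singleton.mp hker)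
  obtain ⟨t, htd, hyt⟩ := exists_frob_conj (p := p) (F := MvPolynomial (Fin 2) (ZMod p) ⧸ 𝔪) hmin
  set f := minpoly (ZMod p) x with hfdef
  haveI : Fact (Irreducible f) := ⟨minpoly.irreducible hx⟩
  set φ := AdjoinRoot.liftAlgHom f (Algebra.ofId (ZMod p) _) x
    (by rw [← minpoly.aeval (ZMod p) x, aeval_def]; rfl) with hφdef
  have hinj : Function.Injective φ := φ.toRingHom.injective
  set ψ := MvPolynomial.aeval (R := ZMod p)
    ![AdjoinRoot.root f, AdjoinRoot.root f ^ p ^ t] with hψdef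
  have hcomp : φ.comp ψ = Ideal.Quotient.mkₐ (ZMod p) 𝔪 := by
    apply MvPolynomial.algHom_ext
    intro i
    fin_cases i <;>
      simp [hψdef, hφdef, AdjoinRoot.liftAlgHom_root, hyt, Ideal.Quotient.mkₐ_eq_mk,
        ← hxdef, ← hydef]
  have hker2 : 𝔪 = RingHom.ker ψ := by
    have h1' : RingHom.ker (φ.comp ψ) = 𝔪 := by
      rw [hcomp]; exact Ideal.Quotient.mkₐ_ker (ZMod p) 𝔪
    rw [← h1']
    ext g
    simp only [RingHom.mem_ker, AlgHom.coe_comp, Function.comp_apply,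
      AlgHom.toRingHom_eq_coe, RingHom.coe_coe]
    exact ⟨fun h => hinj (by rw [map_zero]; exact h), fun h => by rw [h, map_zero]⟩
  have hsurj : Function.Surjective φ := by
    have hs : Function.Surjective (φ.comp ψ) := by
      rw [hcomp]; exact Ideal.Quotient.mkₐ_surjective (ZMod p) 𝔪
    rw [AlgHom.coe_comp] at hs
    exact hs.of_comp
  have hdm : f.natDegree = m := by
    have hc : Nat.card (AdjoinRoot f) = p ^ m := by
      rw [Nat.card_eq_of_bijective φ ⟨hinj, hsurj⟩, h2]
    rw [natCard_adjoinRoot f (minpoly.ne_zero hx)] at hc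
    exact Nat.pow_right_injective (Fact.out : p.Prime).two_le hc
  exact ⟨minpoly.monic hx, minpoly.irreducible hx, hdm, t, hdm ▸ htd, hker2⟩

/-- The minimal polynomial of the image of `X 0` in the quotient. -/
noncomputable def fpoly (p : ℕ) [Fact p.Prime] (𝔪 : Ideal (MvPolynomial (Fin 2) (ZMod p))) :
    (ZMod p)[X] :=
  minpoly (ZMod p) (Ideal.Quotient.mk 𝔪 (MvPolynomial.X 0))

/-- The property extracted by `main_struct`. -/
def prop (p m : ℕ) [Fact p.Prime] (𝔪 : Ideal (MvPolynomial (Fin 2) (ZMod p))) : Prop :=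
  ∃ t, t < m ∧ 𝔪 = RingHom.ker (MvPolynomial.aeval (R := ZMod p)
      ![AdjoinRoot.root (fpoly p 𝔪), AdjoinRoot.root (fpoly p 𝔪) ^ p ^ t])

/-- The injection from (suitable) maximal ideals into the Galois field. -/
noncomputable def phi (p m : ℕ) [Fact p.Prime] (𝔪 : Ideal (MvPolynomial (Fin 2) (ZMod p))) :
    GaloisField p m :=
  if h : prop p m 𝔪 ∧ ((fpoly p 𝔪).aroots (GaloisField p m)).toFinset.card = m then
    (((Finset.equivFinOfCardEq h.2).symm ⟨Nat.find h.1, (Nat.find_spec h.1).1⟩ :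
      ((fpoly p 𝔪).aroots (GaloisField p m)).toFinset) : GaloisField p m)
  else 0

lemma coe_symm_inj {α : Type*} {m : ℕ} (s s' : Finset α) (hs : s.card = m) (hs' : s'.card = m)
    (hss : s = s') (i j : Fin m)
    (h : ((Finset.equivFinOfCardEq hs).symm i : α) = ((Finset.equivFinOfCardEq hs').symm j : α)) :
    i = j := by
  subst hss
  exact (Finset.equivFinOfCardEq hs).symm.injective (Subtype.ext h)

lemma phi_injOn (p m : ℕ) [Fact p.Prime] (hm : 0 < m) :
    Set.InjOn (phi p m) {𝔪 : Ideal (MvPolynomial (Fin 2) (ZMod p)) |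
      𝔪.IsMaximal ∧
      Nat.card (MvPolynomial (Fin 2) (ZMod p) ⧸ 𝔪) = p ^ m ∧
      𝔪.comap ((Polynomial.aeval (R := ZMod p)
          (MvPolynomial.X (0 : Fin 2) : MvPolynomial (Fin 2) (ZMod p))).toRingHom) =
      𝔪.comap ((Polynomial.aeval (R := ZMod p)
          (MvPolynomial.X (1 : Fin 2) : MvPolynomial (Fin 2) (ZMod p))).toRingHom)} := by
  intro a ha b hb hab
  obtain ⟨hmo₁, hirr₁, hdeg₁, hex₁⟩ := main_struct m hm a ha.1 ha.2.1 ha.2.2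
  obtain ⟨hmo₂, hirr₂, hdeg₂, hex₂⟩ := main_struct m hm b hb.1 hb.2.1 hb.2.2
  have h₁ : prop p m a ∧ ((fpoly p a).aroots (GaloisField p m)).toFinset.card = m :=
    ⟨hex₁, card_aroots_galois m hm _ hmo₁ hirr₁ hdeg₁⟩
  have h₂ : prop p m b ∧ ((fpoly p b).aroots (GaloisField p m)).toFinset.card = m :=
    ⟨hex₂, card_aroots_galois m hm _ hmo₂ hirr₂ hdeg₂⟩
  rw [phi, dif_pos h₁, phi, dif_pos h₂] at hab
  -- the common root
  set z₁ := (Finset.equivFinOfCardEq h₁.2).symm ⟨Nat.find h₁.1, (Nat.find_spec h₁.1).1⟩ with hz₁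
  set z₂ := (Finset.equivFinOfCardEq h₂.2).symm ⟨Nat.find h₂.1, (Nat.find_spec h₂.1).1⟩ with hz₂
  have hz₁m : (z₁ : GaloisField p m) ∈ (fpoly p a).aroots (GaloisField p m) :=
    Multiset.mem_toFinset.mp z₁.2
  have hz₂m : (z₂ : GaloisField p m) ∈ (fpoly p b).aroots (GaloisField p m) :=
    Multiset.mem_toFinset.mp z₂.2
  rw [mem_aroots] at hz₁m hz₂m
  have e1 : fpoly p a = minpoly (ZMod p) (z₁ : GaloisField p m) :=
    minpoly.eq_of_irreducible_of_monic hirr₁ hz₁m.2 hmo₁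
  have e2 : fpoly p b = minpoly (ZMod p) (z₂ : GaloisField p m) :=
    minpoly.eq_of_irreducible_of_monic hirr₂ hz₂m.2 hmo₂
  have hfeq : fpoly p a = fpoly p b := by rw [e1, e2, hab]
  have hteq : Nat.find h₁.1 = Nat.find h₂.1 := by
    have := coe_symm_inj _ _ h₁.2 h₂.2 (by rw [hfeq]) _ _ hab
    exact congrArg Fin.val this
  have key : ∀ (f g : (ZMod p)[X]), f = g → ∀ t : ℕ,
      RingHom.ker (MvPolynomial.aeval (R := ZMod p)
        ![AdjoinRoot.root f, AdjoinRoot.root f ^ p ^ t]) =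
      RingHom.ker (MvPolynomial.aeval (R := ZMod p)
        ![AdjoinRoot.root g, AdjoinRoot.root g ^ p ^ t]) := by
    rintro f g rfl t; rfl
  rw [(Nat.find_spec h₁.1).2, (Nat.find_spec h₂.1).2, hteq]
  exact key _ _ hfeq _

end CardMaxIdealsAux

open CardMaxIdealsAux in
/-- Counting bound: the number of maximal ideals `𝔪` of `𝔽_p[X, Y]` whose residue field has
exactly `p^m` elements and whose contractions along the two `𝔽_p`-algebra maps
`𝔽_p[T] → 𝔽_p[X, Y]`, `T ↦ X` and `T ↦ Y`, agree, is at most `p^m`. -/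
theorem card_maximal_ideals_equal_contractions_le
    (p : ℕ) (hp : p.Prime) (m : ℕ) (hm : 0 < m) :
    Set.encard {𝔪 : Ideal (MvPolynomial (Fin 2) (ZMod p)) |
      𝔪.IsMaximal ∧
      Nat.card (MvPolynomial (Fin 2) (ZMod p) ⧸ 𝔪) = p ^ m ∧
      𝔪.comap ((Polynomial.aeval (R := ZMod p)
          (MvPolynomial.X (0 : Fin 2) : MvPolynomial (Fin 2) (ZMod p))).toRingHom) =
      𝔪.comap ((Polynomial.aeval (R := ZMod p)
          (MvPolynomial.X (1 : Fin 2) : MvPolynomial (Fin 2) (ZMod p))).toRingHom)} ≤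
      (p ^ m : ℕ∞) := by
  haveI : Fact p.Prime := ⟨hp⟩
  haveI : Finite (GaloisField p m) := Nat.finite_of_card_ne_zero
    (by rw [GaloisField.card p m hm.ne']; exact (pow_pos hp.pos m).ne')
  refine le_trans (Set.encard_le_encard_of_injOn (t := Set.univ)
    (fun _ _ => Set.mem_univ _) (phi_injOn p m hm)) ?_
  rw [Set.encard_univ, ENat.card_eq_coe_natCard, GaloisField.card p m hm.ne']
  norm_cast
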